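/- Let m = n + p and let x : Fin m → ℝ take values in [0,1], the first n inputs being negated and the last p positive. If the bias is b = -p + 1, then the Łukasiewicz neuron output min(1, max(0, -∑_{i<n} x_i + ∑_{n≤i<m} x_i + (-p+1))) equals the iterated Łukasiewicz conjunction ¬x_1 ⊗ ... ⊗ ¬x_n ⊗ x_{n+1} ⊗ ... ⊗ x_m, where ¬x = 1 - x and a⊗b = max(a + b - 1, 0). Equivalently, both sides equal max(∑_{i<n}(1 - x_i) + ∑_{n≤i<m} x_i - (m - 1), 0). -/

import Mathlib

/-- Łukasiewicz conjunction (t-norm) on the reals: `a ⊗ b = max (a + b - 1) 0`. -/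
noncomputable def lukConj (a b : ℝ) : ℝ := max (a + b - 1) 0

lemma foldr_lukConj (l : List ℝ) (h : ∀ a ∈ l, 0 ≤ a ∧ a ≤ 1) :
    l.foldr lukConj 1 = max (l.sum - ((l.length : ℝ) - 1)) 0 := by
  induction l with
  | nil => simp
  | cons a t ih =>
    have ha := h a List.mem_cons_self
    rw [List.foldr_cons, ih (fun b hb => h b (List.mem_cons_of_mem a hb))]
    unfold lukConj
    rcases le_total (t.sum - ((t.length : ℝ) - 1)) 0 with h1 | h1
    · rw [max_eq_right h1, max_eq_right (by linarith [ha.2]), eq_comm, max_eq_right]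
      simp only [List.sum_cons, List.length_cons]
      push_cast
      linarith [ha.2]
    · rw [max_eq_left h1]
      simp only [List.sum_cons, List.length_cons]
      congr 1
      push_cast
      ring

/-- A Łukasiewicz neuron with `n` negative unit weights, `p` positive unit weights
and bias `b = -p + 1` is conjunctive: its output equals the iterated Łukasiewicz
conjunction `¬x_1 ⊗ ... ⊗ ¬x_n ⊗ x_{n+1} ⊗ ... ⊗ x_m` (where `¬x = 1 - x`), and both
sides equal `max (∑_{i<n} (1 - x_i) + ∑_{n≤i<m} x_i - (m - 1)) 0` for `m = n + p`. -/
theorem conjunctive_neuron (n p : ℕ) (x : Fin (n + p) → ℝ)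
    (hx : ∀ i, x i ∈ Set.Icc (0:ℝ) 1) :
    min 1 (max 0 ((∑ i : Fin (n + p), (if (i : ℕ) < n then -(x i) else x i)) + (-(p:ℝ) + 1)))
        = (List.ofFn (fun i : Fin (n + p) => if (i : ℕ) < n then 1 - x i else x i)).foldr
            lukConj 1 ∧
    min 1 (max 0 ((∑ i : Fin (n + p), (if (i : ℕ) < n then -(x i) else x i)) + (-(p:ℝ) + 1)))
        = max ((∑ i : Fin (n + p), (if (i : ℕ) < n then 1 - x i else x i))
            - (((n : ℝ) + (p : ℝ)) - 1)) 0 := by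
  set S : ℝ := ∑ i : Fin (n + p), (if (i : ℕ) < n then -(x i) else x i) with hS
  set T : ℝ := ∑ i : Fin (n + p), (if (i : ℕ) < n then 1 - x i else x i) with hT
  -- T = n + S
  have hTS : T = (n : ℝ) + S := by
    have key : T - S = (n : ℝ) := by
      rw [hT, hS, ← Finset.sum_sub_distrib]
      have h1 : ∀ i : Fin (n + p),
          (if (i : ℕ) < n then 1 - x i else x i) - (if (i : ℕ) < n then -(x i) else x i)
            = (if (i : ℕ) < n then (1:ℝ) else 0) := by
        intro i; split <;> ring
      rw [Finset.sum_congr rfl (fun i _ => h1 i),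
        Fin.sum_univ_add (f := fun i : Fin (n + p) => if (i : ℕ) < n then (1:ℝ) else 0)]
      simp
    linarith
  -- S ≤ p
  have hSp : S ≤ (p : ℝ) := by
    have : S = ∑ i : Fin n, -(x (Fin.castAdd p i)) + ∑ i : Fin p, x (Fin.natAdd n i) := by
      rw [hS, Fin.sum_univ_add]
      congr 1 <;> refine Finset.sum_congr rfl (fun i _ => ?_)
      · simp [Fin.is_lt]
      · simp
    rw [this]
    have h1 : ∑ i : Fin n, -(x (Fin.castAdd p i)) ≤ 0 :=
      Finset.sum_nonpos (fun i _ => neg_nonpos.2 (hx _).1)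
    have h2 : ∑ i : Fin p, x (Fin.natAdd n i) ≤ ∑ _i : Fin p, (1:ℝ) :=
      Finset.sum_le_sum (fun i _ => (hx _).2)
    simp only [Finset.sum_const, Finset.card_univ, Fintype.card_fin, nsmul_eq_mul,
      mul_one] at h2
    linarith
  have hmain : min 1 (max 0 (S + (-(p:ℝ) + 1))) = max (T - (((n:ℝ) + (p:ℝ)) - 1)) 0 := by
    rw [hTS]
    have harg : S + (-(p:ℝ) + 1) = (n : ℝ) + S - (((n:ℝ) + (p:ℝ)) - 1) := by ring
    rw [harg, max_comm, min_eq_right]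
    exact max_le (by linarith) (by norm_num)
  refine ⟨?_, hmain⟩
  have hb : ∀ a ∈ List.ofFn (fun i : Fin (n + p) => if (i : ℕ) < n then 1 - x i else x i),
      0 ≤ a ∧ a ≤ 1 := by
    intro a ha
    rw [List.mem_ofFn] at ha
    obtain ⟨i, rfl⟩ := ha
    have := hx i
    constructor <;> split <;> linarith [this.1, this.2]
  rw [hmain, foldr_lukConj _ hb, List.sum_ofFn, List.length_ofFn, ← hT]
  congr 1
  push_cast
  ring
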